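/- arXiv:2008.09678 — 2 statements merged into one kernel-verified Lean document; each statement's English description precedes it below -/
import Mathlib

section
/- Let 0 → A →g B →h C → 0 be a short exact sequence of abelian groups. Let g_f : A_f → B_f be the map induced by g on torsion-free quotients, let q : B_f → B_f/g_f(A_f) be the quotient map, and let v : C → B_f/g_f(A_f) be the unique homomorphism with v ∘ h = q ∘ π_B (where π_B : B → B_f is the quotient map). Then the map v_f : C_f → (B_f/g_f(A_f))_f induced by v on torsion-free quotients is an isomorphism. -/
open Submodule

/-- Let `0 → A →g B →h C → 0` be a short exact sequence of abelian groups (viewed as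
`ℤ`-modules).  Let `gf : A_f → B_f` be the map induced by `g` on torsion-free quotients
(characterized by `gf ∘ π_A = π_B ∘ g`), let `q` be the quotient map
`B_f → B_f / gf(A_f)`, and let `v : C → B_f / gf(A_f)` be the unique homomorphism with
`v ∘ h = q ∘ π_B`.  Then the map `vf : C_f → (B_f / gf(A_f))_f` induced by `v` on
torsion-free quotients (characterized by `vf ∘ π_C = π ∘ v`) is an isomorphism. -/
theorem stmt0 {A B C : Type} [AddCommGroup A] [AddCommGroup B] [AddCommGroup C]
    (g : A →ₗ[ℤ] B) (h : B →ₗ[ℤ] C)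
    (hg : Function.Injective g) (hh : Function.Surjective h)
    (hex : LinearMap.range g = LinearMap.ker h)
    (gf : (A ⧸ torsion ℤ A) →ₗ[ℤ] (B ⧸ torsion ℤ B))
    (hgf : gf ∘ₗ (torsion ℤ A).mkQ = (torsion ℤ B).mkQ ∘ₗ g)
    (v : C →ₗ[ℤ] ((B ⧸ torsion ℤ B) ⧸ LinearMap.range gf))
    (hv : v ∘ₗ h = (LinearMap.range gf).mkQ ∘ₗ (torsion ℤ B).mkQ)
    (vf : (C ⧸ torsion ℤ C) →ₗ[ℤ]
      (((B ⧸ torsion ℤ B) ⧸ LinearMap.range gf) ⧸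
        torsion ℤ ((B ⧸ torsion ℤ B) ⧸ LinearMap.range gf)))
    (hvf : vf ∘ₗ (torsion ℤ C).mkQ =
      (torsion ℤ ((B ⧸ torsion ℤ B) ⧸ LinearMap.range gf)).mkQ ∘ₗ v) :
    Function.Bijective vf := by
  constructor
  · rw [injective_iff_map_eq_zero]
    intro c hc
    obtain ⟨x, rfl⟩ := (torsion ℤ C).mkQ_surjective c
    have hvx : v x ∈ torsion ℤ ((B ⧸ torsion ℤ B) ⧸ LinearMap.range gf) := by
      rw [← Submodule.Quotient.mk_eq_zero]
      have h1 := LinearMap.congr_fun hvf x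
      simp only [LinearMap.comp_apply, Submodule.mkQ_apply] at h1
      rw [Submodule.mkQ_apply, h1] at hc
      exact hc
    obtain ⟨n, hn⟩ := hvx
    obtain ⟨b, rfl⟩ := hh x
    -- n • (torsion B).mkQ b ∈ range gf
    have hq : (LinearMap.range gf).mkQ ((n : ℤ) • (torsion ℤ B).mkQ b) = 0 := by
      have hvb := LinearMap.congr_fun hv b
      simp only [LinearMap.comp_apply] at hvb
      rw [map_smul, ← hvb]
      rw [Submonoid.smul_def] at hn
      exact hn
    rw [Submodule.mkQ_apply, Submodule.Quotient.mk_eq_zero] at hq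
    obtain ⟨af, haf⟩ := hq
    obtain ⟨a, rfl⟩ := (torsion ℤ A).mkQ_surjective af
    have hga : (torsion ℤ B).mkQ (g a) = (torsion ℤ B).mkQ ((n : ℤ) • b) := by
      have := LinearMap.congr_fun hgf a
      simp only [LinearMap.comp_apply] at this
      rw [← this, haf, map_smul]
    have htor : (n : ℤ) • b - g a ∈ torsion ℤ B := by
      rw [← Submodule.Quotient.mk_eq_zero, Submodule.Quotient.mk_sub]
      rw [← Submodule.mkQ_apply, ← Submodule.mkQ_apply, hga, sub_self]
    obtain ⟨m, hm⟩ := htor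
    have hzero : ((m : ℤ) * (n : ℤ)) • b - g ((m : ℤ) • a) = 0 := by
      have : (m : ℤ) • ((n : ℤ) • b - g a) = 0 := hm
      rw [smul_sub] at this
      rw [mul_smul, map_smul]
      exact this
    have : ((m : ℤ) * (n : ℤ)) • h b = 0 := by
      have hb : ((m : ℤ) * (n : ℤ)) • b = g ((m : ℤ) • a) := by
        exact sub_eq_zero.mp hzero
      rw [← map_smul, hb]
      have : g ((m : ℤ) • a) ∈ LinearMap.ker h := by
        rw [← hex]; exact ⟨(m : ℤ) • a, rfl⟩
      exact this
    have hmem : h b ∈ torsion ℤ C :=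
      ⟨⟨(m : ℤ) * (n : ℤ), mul_mem m.2 n.2⟩, this⟩
    rw [Submodule.mkQ_apply, Submodule.Quotient.mk_eq_zero]
    exact hmem
  · intro d
    obtain ⟨e, rfl⟩ := Submodule.mkQ_surjective _ d
    obtain ⟨bf, rfl⟩ := Submodule.mkQ_surjective _ e
    obtain ⟨b, rfl⟩ := Submodule.mkQ_surjective _ bf
    refine ⟨(torsion ℤ C).mkQ (h b), ?_⟩
    have h1 := LinearMap.congr_fun hvf (h b)
    have h2 := LinearMap.congr_fun hv b
    simp only [LinearMap.comp_apply] at h1 h2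
    rw [h1, h2]
end

section
/- Let A = ℤ[a,b]/(a², b², 2ab). Then the torsion subgroup of the underlying abelian group of A is the ideal generated by ab (an element of order 2), so A_f = A/T(A) is isomorphic to ℤ[a,b]/(a², b², ab), and there exists no ring homomorphism s : A_f → A such that π ∘ s = id_{A_f}, where π : A → A_f is the quotient map. In other words, the ring A is not free split. -/
open MvPolynomial Submodule

/-- The ideal `(a², b², 2ab)` of `ℤ[a,b]`, with `a = X 0`, `b = X 1`. -/
noncomputable def Iab : Ideal (MvPolynomial (Fin 2) ℤ) :=
  Ideal.span {X 0 ^ 2, X 1 ^ 2, 2 * (X 0 * X 1)}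

/-- The ring `A = ℤ[a,b]/(a², b², 2ab)`. -/
abbrev Aex : Type := MvPolynomial (Fin 2) ℤ ⧸ Iab

/-- The class of `ab` in `A`. -/
noncomputable def abElt : Aex := Ideal.Quotient.mk Iab (X 0 * X 1)

/-- The ideal of `A` generated by (the class of) `ab`. -/
noncomputable def Jab : Ideal Aex := Ideal.span {abElt}

/-- The torsion-free quotient `A_f = A/T(A) = A/(ab)`. -/
abbrev Afex : Type := Aex ⧸ Jab

/-! ### Auxiliary material -/

/-- The ideal `(a², b², ab)`. -/
noncomputable def Jp : Ideal (MvPolynomial (Fin 2) ℤ) :=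
  Ideal.span {X 0 ^ 2, X 1 ^ 2, X 0 * X 1}

theorem lowpart (p : MvPolynomial (Fin 2) ℤ) :
    ∃ c0 ca cb : ℤ, p - (C c0 + C ca * X 0 + C cb * X 1) ∈ Jp := by
  induction p using MvPolynomial.induction_on with
  | C a => exact ⟨a, 0, 0, by simp⟩
  | add p q hp hq =>
    obtain ⟨c0, ca, cb, hp⟩ := hp
    obtain ⟨d0, da, db, hq⟩ := hq
    refine ⟨c0 + d0, ca + da, cb + db, ?_⟩
    have := Ideal.add_mem _ hp hq
    convert this using 1
    simp only [map_add]
    ring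
  | mul_X p i hp =>
    obtain ⟨c0, ca, cb, hp⟩ := hp
    have hx2 : (X 0 ^ 2 : MvPolynomial (Fin 2) ℤ) ∈ Jp := Ideal.subset_span (by simp)
    have hy2 : (X 1 ^ 2 : MvPolynomial (Fin 2) ℤ) ∈ Jp := Ideal.subset_span (by simp)
    have hxy : (X 0 * X 1 : MvPolynomial (Fin 2) ℤ) ∈ Jp := Ideal.subset_span (by simp)
    fin_cases i
    · refine ⟨0, c0, 0, ?_⟩
      have := Ideal.add_mem _ (Ideal.mul_mem_right (X 0) _ hp)
        (Ideal.add_mem _ (Ideal.mul_mem_left _ (C ca) hx2) (Ideal.mul_mem_left _ (C cb) hxy))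
      convert this using 1
      simp only [show (⟨0, by omega⟩ : Fin 2) = 0 from rfl, show (⟨1, by omega⟩ : Fin 2) = 1 from rfl, map_zero, zero_mul, sub_zero, add_zero, neg_zero]
      ring
    · refine ⟨0, 0, c0, ?_⟩
      have := Ideal.add_mem _ (Ideal.mul_mem_right (X 1) _ hp)
        (Ideal.add_mem _ (Ideal.mul_mem_left _ (C cb) hy2) (Ideal.mul_mem_left _ (C ca) hxy))
      convert this using 1
      simp only [show (⟨0, by omega⟩ : Fin 2) = 0 from rfl, show (⟨1, by omega⟩ : Fin 2) = 1 from rfl, map_zero, zero_mul, sub_zero, add_zero, neg_zero]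
      ring

noncomputable def psiT : MvPolynomial (Fin 2) ℤ →+* TrivSqZeroExt ℤ (ℤ × ℤ) :=
  (aeval fun i : Fin 2 => if i = 0 then (TrivSqZeroExt.inr (1,0) : TrivSqZeroExt ℤ (ℤ × ℤ))
    else TrivSqZeroExt.inr (0,1)).toRingHom

theorem psiT_Jp : ∀ q ∈ Jp, psiT q = 0 := by
  intro q hq
  have : Jp ≤ RingHom.ker psiT := by
    rw [Jp, Ideal.span_le]
    rintro x (rfl | rfl | rfl) <;>
      simp [psiT, RingHom.mem_ker, sq, TrivSqZeroExt.inr_mul_inr]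
  exact this hq

theorem Bfree (n : ℤ) (hn : n ≠ 0) (y : MvPolynomial (Fin 2) ℤ ⧸ Jp) (h : n • y = 0) :
    y = 0 := by
  obtain ⟨p, rfl⟩ := Ideal.Quotient.mk_surjective y
  rw [← map_zsmul, Ideal.Quotient.eq_zero_iff_mem, zsmul_eq_mul] at h
  obtain ⟨c0, ca, cb, hp⟩ := lowpart p
  have hl : (n : MvPolynomial (Fin 2) ℤ) * (C c0 + C ca * X 0 + C cb * X 1) ∈ Jp := by
    have := Jp.sub_mem h (Ideal.mul_mem_left _ (n : MvPolynomial (Fin 2) ℤ) hp)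
    convert this using 1
    ring
  have h0 : psiT ((n : MvPolynomial (Fin 2) ℤ) * (C c0 + C ca * X 0 + C cb * X 1)) = 0 :=
    psiT_Jp _ hl
  have hfst := congrArg TrivSqZeroExt.fst h0
  have hsnd := congrArg TrivSqZeroExt.snd h0
  simp [psiT, Prod.ext_iff, hn, smul_eq_mul] at hfst hsnd
  rw [Ideal.Quotient.eq_zero_iff_mem]
  simpa [hfst, hsnd.1, hsnd.2] using hp

/-- A concrete model of `(ℤ/2)[a,b]/(a²,b²)`, with coordinates the coefficients of
`1, a, b, ab`. -/
def Rf : Type := ZMod 2 × ZMod 2 × ZMod 2 × ZMod 2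

instance : AddCommGroup Rf := inferInstanceAs (AddCommGroup (ZMod 2 × ZMod 2 × ZMod 2 × ZMod 2))
instance : DecidableEq Rf := inferInstanceAs (DecidableEq (ZMod 2 × ZMod 2 × ZMod 2 × ZMod 2))
instance : Fintype Rf := inferInstanceAs (Fintype (ZMod 2 × ZMod 2 × ZMod 2 × ZMod 2))

def rmul (x y : Rf) : Rf :=
  (x.1 * y.1, x.1 * y.2.1 + x.2.1 * y.1, x.1 * y.2.2.1 + x.2.2.1 * y.1,
    x.1 * y.2.2.2 + x.2.2.2 * y.1 + x.2.1 * y.2.2.1 + x.2.2.1 * y.2.1)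

theorem Rf_add_def (x y : Rf) :
    x + y = (x.1 + y.1, x.2.1 + y.2.1, x.2.2.1 + y.2.2.1, x.2.2.2 + y.2.2.2) := rfl

instance : CommRing Rf :=
  { (inferInstance : AddCommGroup Rf) with
    mul := rmul
    one := ((1, 0, 0, 0) : ZMod 2 × ZMod 2 × ZMod 2 × ZMod 2)
    left_distrib := by
      intro x y z
      show rmul _ _ = rmul _ _ + rmul _ _
      rw [Rf_add_def (rmul x y) (rmul x z)]
      simp only [rmul, Rf_add_def, Prod.mk.injEq]
      refine Prod.ext ?_ (Prod.ext ?_ (Prod.ext ?_ ?_)) <;> ring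
    right_distrib := by
      intro x y z
      show rmul _ _ = rmul _ _ + rmul _ _
      rw [Rf_add_def (rmul x z) (rmul y z)]
      simp only [rmul, Rf_add_def, Prod.mk.injEq]
      refine Prod.ext ?_ (Prod.ext ?_ (Prod.ext ?_ ?_)) <;> ring
    zero_mul := by decide
    mul_zero := by decide
    mul_assoc := by
      rintro ⟨x1, x2, x3, x4⟩ ⟨y1, y2, y3, y4⟩ ⟨z1, z2, z3, z4⟩
      show rmul (rmul _ _) _ = rmul _ (rmul _ _)
      simp only [rmul, Prod.mk.injEq]
      refine Prod.ext ?_ (Prod.ext ?_ (Prod.ext ?_ ?_)) <;> ring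
    one_mul := by decide
    mul_one := by decide
    mul_comm := by
      rintro ⟨x1, x2, x3, x4⟩ ⟨y1, y2, y3, y4⟩
      show rmul _ _ = rmul _ _
      simp only [rmul, Prod.mk.injEq]
      refine Prod.ext ?_ (Prod.ext ?_ (Prod.ext ?_ ?_)) <;> ring }

def aRf : Rf := ((0, 1, 0, 0) : ZMod 2 × ZMod 2 × ZMod 2 × ZMod 2)
def bRf : Rf := ((0, 0, 1, 0) : ZMod 2 × ZMod 2 × ZMod 2 × ZMod 2)

noncomputable def phiD : MvPolynomial (Fin 2) ℤ →+* Rf :=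
  eval₂Hom (Int.castRingHom Rf) ![aRf, bRf]

theorem ab_notmem : (X 0 * X 1 : MvPolynomial (Fin 2) ℤ) ∉ Iab := by
  intro h
  have hker : Iab ≤ RingHom.ker phiD := by
    rw [Iab, Ideal.span_le]
    rintro x (rfl | rfl | rfl) <;>
      simp only [RingHom.mem_ker, SetLike.mem_coe, map_mul, map_pow, map_ofNat, phiD,
        eval₂Hom_X', Matrix.cons_val_zero, Matrix.cons_val_one, Matrix.head_cons] <;> decide
  have h0 : phiD (X 0 * X 1) = 0 := hker h
  simp only [map_mul, phiD, eval₂Hom_X', Matrix.cons_val_zero, Matrix.cons_val_one,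
    Matrix.head_cons] at h0
  exact absurd h0 (by decide)

theorem abElt_ne_zero : abElt ≠ 0 := fun h =>
  ab_notmem (Ideal.Quotient.eq_zero_iff_mem.mp h)

theorem two_nsmul_abElt : (2 : ℕ) • abElt = 0 := by
  rw [abElt, ← map_nsmul, Ideal.Quotient.eq_zero_iff_mem]
  have : (2 : ℕ) • (X 0 * X 1 : MvPolynomial (Fin 2) ℤ) = 2 * (X 0 * X 1) := by
    push_cast [nsmul_eq_mul]; ring
  rw [this]
  exact Ideal.subset_span (by simp)

theorem Jab_eq_map : Jab = (Ideal.span {(X 0 * X 1 : MvPolynomial (Fin 2) ℤ)}).map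
    (Ideal.Quotient.mk Iab) := by
  rw [Jab, Ideal.map_span, Set.image_singleton, abElt]

theorem sup_eq_Jp : Iab ⊔ Ideal.span {(X 0 * X 1 : MvPolynomial (Fin 2) ℤ)} = Jp := by
  apply le_antisymm
  · apply sup_le
    · rw [Iab, Ideal.span_le]
      rintro x (rfl | rfl | rfl)
      · exact Ideal.subset_span (by simp)
      · exact Ideal.subset_span (by simp)
      · exact Ideal.mul_mem_left _ 2 (Ideal.subset_span (by simp))
    · rw [Ideal.span_le]
      rintro x rfl
      exact Ideal.subset_span (by simp)
  · rw [Jp, Ideal.span_le]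
    rintro x (rfl | rfl | rfl)
    · exact Ideal.mem_sup_left (Ideal.subset_span (by simp))
    · exact Ideal.mem_sup_left (Ideal.subset_span (by simp))
    · exact Ideal.mem_sup_right (Ideal.subset_span rfl)

/-- The ring isomorphism `A_f ≃+* ℤ[a,b]/(a²,b²,ab)`. -/
noncomputable def eIso : Afex ≃+* MvPolynomial (Fin 2) ℤ ⧸ Jp :=
  (Ideal.quotEquivOfEq Jab_eq_map).trans
    ((DoubleQuot.quotQuotEquivQuotSup Iab (Ideal.span {X 0 * X 1})).trans
      (Ideal.quotEquivOfEq sup_eq_Jp))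

set_option maxHeartbeats 1000000 in
set_option synthInstance.maxHeartbeats 400000 in
/-- Let `A = ℤ[a,b]/(a², b², 2ab)`.  Then the torsion subgroup of the underlying abelian
group of `A` is the ideal generated by `ab`, the element `ab` has additive order `2`,
the torsion-free quotient `A_f = A/T(A)` is isomorphic to `ℤ[a,b]/(a², b², ab)`, and
there exists no ring homomorphism `s : A_f → A` such that `π ∘ s = id`, where
`π : A → A_f` is the quotient map.  In other words, the ring `A` is not free split. -/
theorem stmt11 :
    ((torsion ℤ Aex : Set Aex) = (Jab : Set Aex)) ∧
    addOrderOf abElt = 2 ∧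
    Nonempty (Afex ≃+*
      (MvPolynomial (Fin 2) ℤ ⧸
        Ideal.span {(X 0 : MvPolynomial (Fin 2) ℤ) ^ 2, X 1 ^ 2, X 0 * X 1})) ∧
    ¬ ∃ s : Afex →+* Aex, (Ideal.Quotient.mk Jab).comp s = RingHom.id Afex := by
  refine ⟨?_, ?_, ⟨eIso⟩, ?_⟩
  · ext x
    simp only [SetLike.mem_coe]
    constructor
    · rintro hx
      obtain ⟨⟨n, hn⟩, hnx⟩ := hx
      have hn' : (n : ℤ) ≠ 0 := nonZeroDivisors.ne_zero hn
      have h1 : n • (Ideal.Quotient.mk Jab x) = 0 := by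
        rw [← map_zsmul]
        simp only [Submonoid.smul_def] at hnx
        rw [hnx, map_zero]
      have h2 : n • eIso (Ideal.Quotient.mk Jab x) = 0 := by
        rw [← map_zsmul, h1, map_zero]
      have h3 := Bfree n hn' _ h2
      have h4 : Ideal.Quotient.mk Jab x = 0 := by
        apply eIso.injective
        rw [h3, map_zero]
      exact Ideal.Quotient.eq_zero_iff_mem.mp h4
    · intro hx
      obtain ⟨c, hc⟩ := Ideal.mem_span_singleton'.mp hx
      refine ⟨⟨2, by simp [mem_nonZeroDivisors_iff_ne_zero]⟩, ?_⟩
      have h2 : (2 : ℤ) • abElt = 0 := by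
        have := two_nsmul_abElt
        rw [show ((2 : ℕ) • abElt) = (2 : ℤ) • abElt by push_cast; rfl] at this
        exact this
      show (2 : ℤ) • x = 0
      rw [← hc, ← mul_smul_comm, h2, mul_zero]
  · have : Fact (Nat.Prime 2) := ⟨Nat.prime_two⟩
    exact addOrderOf_eq_prime two_nsmul_abElt abElt_ne_zero
  · rintro ⟨s, hs⟩
    have hs' : ∀ y : Afex, Ideal.Quotient.mk Jab (s y) = y := fun y => RingHom.congr_fun hs y
    set a' : Aex := Ideal.Quotient.mk Iab (X 0) with ha'
    set b' : Aex := Ideal.Quotient.mk Iab (X 1) with hb'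
    have hab : a' * b' = abElt := (map_mul _ _ _).symm
    have haa : a' * abElt = 0 := by
      rw [ha', abElt, ← map_mul,
        show (X 0 * (X 0 * X 1) : MvPolynomial (Fin 2) ℤ) = X 0 ^ 2 * X 1 by ring,
        Ideal.Quotient.eq_zero_iff_mem]
      exact Ideal.mul_mem_right _ _ (Ideal.subset_span (by simp))
    have hbb : b' * abElt = 0 := by
      rw [hb', abElt, ← map_mul,
        show (X 1 * (X 0 * X 1) : MvPolynomial (Fin 2) ℤ) = X 1 ^ 2 * X 0 by ring,
        Ideal.Quotient.eq_zero_iff_mem]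
      exact Ideal.mul_mem_right _ _ (Ideal.subset_span (by simp))
    have habab : abElt * abElt = 0 := by
      rw [abElt, ← map_mul,
        show (X 0 * X 1 * (X 0 * X 1) : MvPolynomial (Fin 2) ℤ) = X 0 ^ 2 * (X 1 * X 1) by ring,
        Ideal.Quotient.eq_zero_iff_mem]
      exact Ideal.mul_mem_right _ _ (Ideal.subset_span (by simp))
    set sa : Aex := s (Ideal.Quotient.mk Jab a') with hsa
    set sb : Aex := s (Ideal.Quotient.mk Jab b') with hsb
    have hu : sa - a' ∈ Jab := by
      rw [← Ideal.Quotient.eq_zero_iff_mem, map_sub, hsa, hs', sub_self]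
    have hv : sb - b' ∈ Jab := by
      rw [← Ideal.Quotient.eq_zero_iff_mem, map_sub, hsb, hs', sub_self]
    obtain ⟨cu, hcu⟩ := Ideal.mem_span_singleton'.mp hu
    obtain ⟨cv, hcv⟩ := Ideal.mem_span_singleton'.mp hv
    have key : sa * sb = abElt := by
      linear_combination (-sb) * hcu + (-(a' + cu * abElt)) * hcv + hab + cv * haa + cu * hbb + (cu * cv) * habab
    have hmkab : Ideal.Quotient.mk Jab abElt = 0 :=
      Ideal.Quotient.eq_zero_iff_mem.mpr (Ideal.subset_span rfl)
    have : sa * sb = 0 := by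
      rw [hsa, hsb, ← map_mul, ← map_mul, hab, hmkab, map_zero]
    exact abElt_ne_zero (key ▸ this)
end
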